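/- Let G be a finite group, N a normal subgroup of G, F a field of characteristic p > 0, and I the right annihilator of J(F[N]) in F[G]. Let e be a primitive idempotent of F[G] and P = F[G]e the corresponding indecomposable left ideal (principal indecomposable module), and note I ∩ P = I·P. Then either I·P = P, or I·P ⊆ J(F[G])·P; in the latter case P/(I·P) is a nonzero indecomposable module over F[G]/I whose head P/(J(F[G])·P + I·P) is isomorphic to the head P/(J(F[G])·P) of P. -/

import Mathlib

open MonoidAlgebra Polynomial


open Polynomial

section GenRing
variable {R : Type*} [Ring R]

/-- The Jacobson radical (inf of maximal left ideals) is closed under right multiplication. -/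
lemma jac_mul_right {x : R} (hx : x ∈ Ideal.jacobson (⊥ : Ideal R)) (c : R) :
    x * c ∈ Ideal.jacobson (⊥ : Ideal R) := by
  rw [Ideal.jacobson, Submodule.mem_sInf] at hx ⊢
  rintro M ⟨-, hM⟩
  by_cases hc : c ∈ M
  · simpa [smul_eq_mul] using M.smul_mem x hc
  · set K : Ideal R :=
      { carrier := {z | z * c ∈ M}
        add_mem' := fun {a b} ha hb => by
          simp only [Set.mem_setOf_eq, add_mul] at *
          exact M.add_mem ha hb
        zero_mem' := by simp
        smul_mem' := fun a z hz => by
          simp only [Set.mem_setOf_eq, smul_eq_mul, mul_assoc] at *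
          simpa using M.smul_mem a hz } with hKdef
    have hmemK : ∀ z : R, z ∈ K ↔ z * c ∈ M := fun z => Iff.rfl
    have hKmax : K.IsMaximal := by
      rw [Ideal.isMaximal_def]
      constructor
      · intro h
        exact hc (by simpa using (hmemK 1).mp (h ▸ Submodule.mem_top))
      · intro L hKL
        obtain ⟨b, hbL, hbK⟩ := SetLike.exists_of_lt hKL
        have hbc : b * c ∉ M := hbK
        have hlt : M < M ⊔ Ideal.span {b * c} :=
          lt_of_le_of_ne le_sup_left
            (fun h => hbc (h ▸ Submodule.mem_sup_right (Ideal.subset_span rfl)))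
        have htop : M ⊔ Ideal.span {b * c} = ⊤ := hM.out.2 _ hlt
        rw [eq_top_iff]
        intro z _
        have hz : z * c ∈ M ⊔ Ideal.span {b * c} := htop ▸ Submodule.mem_top
        obtain ⟨m, hm, w, hw, hmw⟩ := Submodule.mem_sup.mp hz
        obtain ⟨a, rfl⟩ := Submodule.mem_span_singleton.mp hw
        have h1 : (z - a * b) * c = m := by
          have hh : (z - a * b) * c = z * c - a • (b * c) := by
            rw [sub_mul, mul_assoc, smul_eq_mul]
          rw [hh, ← hmw]; abel
        have h2 : z - a * b ∈ K := (hmemK _).mpr (h1 ▸ hm)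
        have h3 : a * b ∈ L := L.smul_mem a hbL
        simpa using L.add_mem (hKL.le h2) h3
    exact (hmemK x).mp (hx K ⟨bot_le, hKmax⟩)

/-- Image of a Jacobson-radical element under a ring isomorphism is in the Jacobson radical. -/
lemma jac_map {S : Type*} [Ring S] (σ : R ≃+* S) {y : R}
    (hy : y ∈ Ideal.jacobson (⊥ : Ideal R)) : σ y ∈ Ideal.jacobson (⊥ : Ideal S) := by
  rw [Ideal.jacobson, Submodule.mem_sInf] at hy ⊢
  rintro M ⟨-, hM⟩
  set K : Ideal R :=
    { carrier := {z | σ z ∈ M}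
      add_mem' := fun {a b} ha hb => by
        simp only [Set.mem_setOf_eq, map_add] at *
        exact M.add_mem ha hb
      zero_mem' := by simp
      smul_mem' := fun a z hz => by
        simp only [Set.mem_setOf_eq, smul_eq_mul, map_mul] at *
        simpa using M.smul_mem (σ a) hz } with hKdef
  have hmemK : ∀ z : R, z ∈ K ↔ σ z ∈ M := fun z => Iff.rfl
  have hKmax : K.IsMaximal := by
    rw [Ideal.isMaximal_def]
    constructor
    · intro h
      have h1 : σ (1 : R) ∈ M := (hmemK 1).mp (h ▸ Submodule.mem_top)
      rw [map_one] at h1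
      exact hM.ne_top (Ideal.eq_top_iff_one M |>.mpr h1)
    · intro L hKL
      obtain ⟨b, hbL, hbK⟩ := SetLike.exists_of_lt hKL
      have hbM : σ b ∉ M := hbK
      have hlt : M < M ⊔ Ideal.span {σ b} :=
        lt_of_le_of_ne le_sup_left
          (fun h => hbM (h ▸ Submodule.mem_sup_right (Ideal.subset_span rfl)))
      have htop : M ⊔ Ideal.span {σ b} = ⊤ := hM.out.2 _ hlt
      rw [eq_top_iff]
      intro z _
      have hz : σ z ∈ M ⊔ Ideal.span {σ b} := htop ▸ Submodule.mem_top
      obtain ⟨m, hm, w, hw, hmw⟩ := Submodule.mem_sup.mp hz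
      obtain ⟨a, rfl⟩ := Submodule.mem_span_singleton.mp hw
      have h2 : z - σ.symm a * b ∈ K := by
        rw [hmemK, map_sub, map_mul, RingEquiv.apply_symm_apply]
        have : σ z - a * σ b = m := by rw [← hmw, smul_eq_mul]; abel
        rw [this]; exact hm
      have h3 : σ.symm a * b ∈ L := L.smul_mem _ hbL
      simpa using L.add_mem (hKL.le h2) h3
  exact (hmemK y).mp (hy K ⟨bot_le, hKmax⟩)

end GenRing


section AlgHelpersA
variable {F A : Type*} [Field F] [Ring A] [Algebra F A]

lemma commute_aeval {x r : A} (h : Commute x r) (p : F[X]) :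
    Commute x (Polynomial.aeval r p) := by
  induction p using Polynomial.induction_on' with
  | add p q hp hq => rw [map_add]; exact hp.add_right hq
  | monomial n a =>
      rw [Polynomial.aeval_monomial]
      exact (Algebra.commute_algebraMap_right a x).mul_right (h.pow_right n)

lemma pow_factor (r : A) :
    ∀ (k : ℕ) (q : F[X]), q.natDegree ≤ k → q ≠ 0 →
      ∀ m : ℕ, r ^ m * Polynomial.aeval r q = 0 →
      ∃ (n : ℕ) (p : F[X]), r ^ n = r ^ (n + 1) * Polynomial.aeval r p := by
  intro k
  induction k with
  | zero =>
      intro q hdeg hq0 m hm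
      obtain ⟨a, rfl⟩ := Polynomial.natDegree_eq_zero.mp (Nat.le_zero.mp hdeg)
      have ha : a ≠ 0 := fun h => hq0 (by rw [h, map_zero])
      have h1 : r ^ m * (a • (1 : A)) = 0 := by
        simpa [Polynomial.aeval_C, Algebra.algebraMap_eq_smul_one] using hm
      have h2 : r ^ m = 0 := by
        have := congrArg (fun z => a⁻¹ • z) h1
        simpa [smul_smul, inv_mul_cancel₀ ha, mul_smul_comm] using this
      exact ⟨m, 0, by rw [h2, map_zero, mul_zero]⟩
  | succ k ih =>
      intro q hdeg hq0 m hm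
      by_cases h0 : q.coeff 0 = 0
      · have hqX : (X : F[X]) * q.divX = q := by
          have := Polynomial.X_mul_divX_add (p := q)
          rwa [h0, Polynomial.C_0, add_zero] at this
        have hdvx0 : q.divX ≠ 0 := by
          intro h; rw [h, mul_zero] at hqX; exact hq0 hqX.symm
        have hdeg' : q.divX.natDegree ≤ k := by
          rw [Polynomial.natDegree_divX_eq_natDegree_tsub_one]
          omega
        refine ih q.divX hdeg' hdvx0 (m + 1) ?_
        have : Polynomial.aeval r q = r * Polynomial.aeval r q.divX := by
          conv_lhs => rw [← hqX]
          rw [map_mul, Polynomial.aeval_X]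
        rw [this, ← mul_assoc, ← pow_succ] at hm
        exact hm
      · -- coeff 0 ≠ 0 : n = m works
        set a := q.coeff 0 with ha
        set w := Polynomial.aeval r q.divX with hw
        have hq : Polynomial.aeval r q = r * w + a • 1 := by
          conv_lhs => rw [← Polynomial.X_mul_divX_add (p := q)]
          rw [map_add, map_mul, Polynomial.aeval_X, Polynomial.aeval_C,
            Algebra.algebraMap_eq_smul_one]
        have h1 : r ^ (m + 1) * w + a • r ^ m = 0 := by
          rw [hq, mul_add] at hm
          rw [pow_succ, mul_assoc]  -- r^(m+1) * w = r^m * (r*w)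
          have : r ^ m * (a • (1:A)) = a • r ^ m := by
            rw [mul_smul_comm, mul_one]
          rw [this] at hm; exact hm
        have h2 : r ^ m = r ^ (m + 1) * ((-a⁻¹) • w) := by
          have h3 : a • r ^ m = -(r ^ (m+1) * w) := by
            rw [eq_neg_iff_add_eq_zero, add_comm]; exact h1
          have := congrArg (fun z => a⁻¹ • z) h3
          simp only [smul_smul, inv_mul_cancel₀ h0, one_smul] at this
          rw [this, mul_smul_comm, neg_smul, smul_neg]
        refine ⟨m, Polynomial.C (-a⁻¹) * q.divX, ?_⟩
        rw [map_mul, Polynomial.aeval_C, Algebra.algebraMap_eq_smul_one]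
        rw [h2]
        congr 1
        rw [smul_mul_assoc, one_mul]

end AlgHelpersA

section AlgHelpers
variable {F A : Type*} [Field F] [Ring A] [Algebra F A]

lemma exists_left_inv [Module.Finite F A]
    (e : A) (he : IsIdempotentElem e)
    (hprim : ∀ a b : A, IsIdempotentElem a → IsIdempotentElem b →
      a * b = 0 → b * a = 0 → e = a + b → a = 0 ∨ b = 0)
    (r : A) (her : e * r = r) (hre : r * e = r) (hnn : ¬ IsNilpotent r) :
    ∃ s : A, s * r = e := by
  have hint : IsIntegral F r := IsIntegral.of_finite F r
  have hq0 : minpoly F r ≠ 0 := minpoly.ne_zero hint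
  have haev : r ^ 0 * Polynomial.aeval r (minpoly F r) = 0 := by
    rw [pow_zero, one_mul, minpoly.aeval]
  obtain ⟨n, p, hn⟩ := pow_factor r (minpoly F r).natDegree (minpoly F r) le_rfl hq0 0 haev
  set d := Polynomial.aeval r p with hd
  have hrd : Commute r d := commute_aeval (Commute.refl r) p
  have hced : Commute e r := by rw [Commute, SemiconjBy, her, hre]
  have hed : Commute e d := commute_aeval hced p
  match n, hn with
  | 0, hn =>
    rw [pow_zero, pow_one] at hn
    refine ⟨e * d, ?_⟩
    rw [mul_assoc, ← hrd.eq, ← hn, mul_one]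
  | (k + 1), hn =>
    set n := k + 1 with hndef
    have hkey : ∀ j, r ^ (n + j) * d ^ j = r ^ n := by
      intro j
      induction j with
      | zero => rw [pow_zero, mul_one, add_zero]
      | succ j ihj =>
        have c1 : Commute (r * d) (d ^ j) := (hrd.mul_left (Commute.refl d)).pow_right j
        calc r ^ (n + (j+1)) * d ^ (j+1)
            = (r ^ (n + j) * r) * (d * d ^ j) := by
              rw [show n + (j+1) = (n+j)+1 from rfl, pow_succ, pow_succ']
          _ = r ^ (n + j) * ((r * d) * d ^ j) := by rw [mul_assoc, mul_assoc]
          _ = r ^ (n + j) * (d ^ j * (r * d)) := by rw [c1.eq]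
          _ = (r ^ (n + j) * d ^ j) * (r * d) := by rw [mul_assoc]
          _ = r ^ n * (r * d) := by rw [ihj]
          _ = r ^ (n + 1) * d := by conv_rhs => rw [pow_succ, mul_assoc]
          _ = r ^ n := hn.symm
    set f := r ^ n * d ^ n with hf
    have hdnrn : Commute (d ^ n) (r ^ n) := (hrd.symm.pow_right n).pow_left n
    have hff : f * f = f := by
      calc f * f = r ^ n * (d ^ n * (r ^ n * d ^ n)) := by rw [hf, mul_assoc]
        _ = r ^ n * (r ^ n * (d ^ n * d ^ n)) := by
            rw [← mul_assoc (d ^ n), hdnrn.eq, mul_assoc]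
        _ = (r ^ (n + n) * d ^ n) * d ^ n := by rw [← mul_assoc, ← mul_assoc, ← pow_add]
        _ = r ^ n * d ^ n := by rw [hkey n]
        _ = f := hf.symm
    have hf0 : f ≠ 0 := by
      intro h
      apply hnn
      refine ⟨n, ?_⟩
      have : r ^ n = r ^ n * f := by
        conv_lhs => rw [← hkey n]
        rw [pow_add, hf, mul_assoc]
      rw [this, h, mul_zero]
    have hern : e * r ^ n = r ^ n := by
      rw [hndef, pow_succ', ← mul_assoc, her]
    have hrne : r ^ n * e = r ^ n := by
      rw [hndef, pow_succ, mul_assoc, hre]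
    have hef : e * f = f := by rw [hf, ← mul_assoc, hern]
    have hfe : f * e = f := by
      rw [hf, mul_assoc, ← (hed.pow_right n).eq, ← mul_assoc, hrne]
    have hfidem : IsIdempotentElem f := hff
    have hcidem : IsIdempotentElem (e - f) := by
      unfold IsIdempotentElem
      rw [mul_sub, sub_mul, sub_mul, he, hef, hfe, hff]
      abel
    have hfc : f * (e - f) = 0 := by rw [mul_sub, hfe, hff, sub_self]
    have hcf : (e - f) * f = 0 := by rw [sub_mul, hef, hff, sub_self]
    have hsum : e = f + (e - f) := by abel
    rcases hprim f (e - f) hfidem hcidem hfc hcf hsum with h | h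
    · exact absurd h hf0
    · have hef2 : e = f := by rwa [sub_eq_zero] at h
      refine ⟨r ^ k * d ^ n, ?_⟩
      rw [mul_assoc, (hrd.symm.pow_left n).eq, ← mul_assoc, ← pow_succ, ← hndef, ← hf]
      exact hef2.symm

end AlgHelpers

section AlgHelpers2
variable {F A : Type*} [Field F] [Ring A] [Algebra F A]

/-- Any element of `P = span {e}` which is not in `J(A)·P` generates an ideal containing `e`. -/
lemma span_le_jp [Module.Finite F A]
    (e : A) (he : IsIdempotentElem e)
    (hprim : ∀ a b : A, IsIdempotentElem a → IsIdempotentElem b →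
      a * b = 0 → b * a = 0 → e = a + b → a = 0 ∨ b = 0)
    (x : A) (hxe : x * e = x)
    (hx : x ∉ Submodule.span A (Set.image2 (· * ·)
      ((Ideal.jacobson (⊥ : Ideal A) : Set A)) ((Ideal.span {e} : Ideal A) : Set A))) :
    e ∈ Ideal.span {x} := by
  by_cases hcase : ∃ a, ¬ IsNilpotent (e * (a * x))
  · obtain ⟨a, hna⟩ := hcase
    have her : e * (e * (a * x)) = e * (a * x) := by rw [← mul_assoc, he]
    have hre : (e * (a * x)) * e = e * (a * x) := by
      rw [mul_assoc, mul_assoc, hxe]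
    obtain ⟨s, hs⟩ := exists_left_inv (F := F) e he hprim _ her hre hna
    rw [Ideal.span]
    rw [Submodule.mem_span_singleton]
    refine ⟨s * e * a, ?_⟩
    rw [smul_eq_mul, mul_assoc, mul_assoc]
    exact hs
  · push_neg at hcase
    have hxJ : x ∈ Ideal.jacobson (⊥ : Ideal A) := by
      rw [Ideal.jacobson, Submodule.mem_sInf]
      rintro M ⟨-, hM⟩
      by_contra hxM
      have hlt : M < M ⊔ Ideal.span {x} :=
        lt_of_le_of_ne le_sup_left
          (fun h => hxM (h ▸ Submodule.mem_sup_right (Ideal.subset_span rfl)))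
      have htop : M ⊔ Ideal.span {x} = ⊤ := hM.out.2 _ hlt
      have h1 : (1 : A) ∈ M ⊔ Ideal.span {x} := htop ▸ Submodule.mem_top
      obtain ⟨m, hm, w, hw, hmw⟩ := Submodule.mem_sup.mp h1
      obtain ⟨a, rfl⟩ := Submodule.mem_span_singleton.mp hw
      set r := e * (a * x) with hr
      have hrn : IsNilpotent r := hcase a
      have hre : r * e = r := by rw [hr, mul_assoc, mul_assoc, hxe]
      have her : e - r ∈ M := by
        have hh : e - r = e * m := by
          have h5 : e * (m + a • x) = e := by rw [hmw, mul_one]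
          rw [mul_add, smul_eq_mul, ← mul_assoc] at h5
          rw [hr, ← mul_assoc]
          exact (eq_sub_of_add_eq h5).symm
        rw [hh]
        simpa [smul_eq_mul] using M.smul_mem e hm
      have hstep : ∀ j : ℕ, e - r ^ (j + 1) ∈ M := by
        intro j
        induction j with
        | zero => simpa [pow_one] using her
        | succ j ihj =>
          have hh : e - r ^ (j + 2) = (e - r) + r * (e - r ^ (j + 1)) := by
            rw [mul_sub, hre, ← pow_succ']
            abel
          rw [hh]
          refine M.add_mem her ?_
          simpa [smul_eq_mul] using M.smul_mem r ihj
      obtain ⟨nn, hnn⟩ := hrn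
      have heM : e ∈ M := by
        have := hstep nn
        rwa [pow_succ, hnn, zero_mul, sub_zero] at this
      refine hxM ?_
      have := M.smul_mem x heM
      rwa [smul_eq_mul, hxe] at this
    refine absurd (Submodule.subset_span ?_) hx
    refine Set.mem_image2.mpr ⟨x, hxJ, e, Ideal.subset_span rfl, hxe⟩

end AlgHelpers2

section Conj
variable (F : Type*) [Field F] {G : Type*} [Group G] (N : Subgroup G) [hN : N.Normal]

noncomputable def conjEquiv (g : G) : MonoidAlgebra F ↥N ≃ₐ[F] MonoidAlgebra F ↥N :=
  MonoidAlgebra.domCongr F F ((MulAut.conjNormal g⁻¹ : MulAut ↥N) : ↥N ≃* ↥N)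

lemma conj_comm_single (g : G) (y : MonoidAlgebra F ↥N) :
    (mapDomainAlgHom F F N.subtype) y * (single g 1) =
      (single g 1) * (mapDomainAlgHom F F N.subtype) (conjEquiv F N g y) := by
  induction y using MonoidAlgebra.induction_on with
  | of n =>
      simp only [conjEquiv, MonoidAlgebra.of_apply, domCongr_single,
        mapDomainAlgHom_apply, Finsupp.mapDomain_single, MonoidAlgebra.mapDomain_single, single_mul_single,
        mul_one, one_mul]
      congr 1
      have : ((MulAut.conjNormal g⁻¹ n : ↥N) : G) = g⁻¹ * (n : G) * g := by
        rw [MulAut.conjNormal_apply, inv_inv]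
      rw [Subgroup.coe_subtype, this]
      group
  | add f1 f2 h1 h2 => simp only [map_add, add_mul, mul_add, h1, h2]
  | smul c f h => simp only [map_smul, smul_mul_assoc, mul_smul_comm, h]

lemma ann_smul (β α : MonoidAlgebra F G)
    (hα : ∀ x ∈ (mapDomainAlgHom F F N.subtype (M := ↥N)) ''
      ((Ideal.jacobson (⊥ : Ideal (MonoidAlgebra F ↥N)) : Set (MonoidAlgebra F ↥N))),
      x * α = 0) :
    ∀ x ∈ (mapDomainAlgHom F F N.subtype (M := ↥N)) ''
      ((Ideal.jacobson (⊥ : Ideal (MonoidAlgebra F ↥N)) : Set (MonoidAlgebra F ↥N))),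
      x * (β * α) = 0 := by
  intro x hx
  induction β using MonoidAlgebra.induction_on with
  | of g =>
      obtain ⟨y, hy, rfl⟩ := hx
      have hcomm := conj_comm_single F N g y
      rw [MonoidAlgebra.of_apply, ← mul_assoc, hcomm, mul_assoc]
      have hjac : conjEquiv F N g y ∈ Ideal.jacobson (⊥ : Ideal (MonoidAlgebra F ↥N)) := by
        have := jac_map (conjEquiv F N g).toRingEquiv hy
        simpa using this
      rw [hα _ ⟨conjEquiv F N g y, hjac, rfl⟩, mul_zero]
  | add f1 f2 h1 h2 => rw [add_mul, mul_add, h1, h2, add_zero]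
  | smul c f h => rw [smul_mul_assoc, mul_smul_comm, h, smul_zero]

end Conj

/-- Let `I` be the right annihilator of `J(F[N])` in `F[G]`, `e` a primitive
idempotent of `F[G]` and `P = F[G]e` the corresponding principal indecomposable left ideal;
note `I ∩ P = I·P`.  Then either `I·P = P`, or `I·P ⊆ J(F[G])·P`; in the latter case
`P/(I·P)` is a nonzero indecomposable `F[G]/I`-module whose head `P/(J(F[G])·P + I·P)` is
isomorphic to the head `P/(J(F[G])·P)` of `P`. -/
theorem principal_indecomposable_mod_annihilator
    (F : Type) [Field F] (p : ℕ) (hp : 0 < p) (hchar : CharP F p)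
    (G : Type) [Group G] [Fintype G] (N : Subgroup G) (hN : N.Normal)
    (e : MonoidAlgebra F G) (he : IsIdempotentElem e) (he0 : e ≠ 0)
    (hprim : ∀ a b : MonoidAlgebra F G, IsIdempotentElem a → IsIdempotentElem b →
      a * b = 0 → b * a = 0 → e = a + b → a = 0 ∨ b = 0) :
    let ι : MonoidAlgebra F N →ₐ[F] MonoidAlgebra F G :=
      MonoidAlgebra.mapDomainAlgHom F F N.subtype
    let Jset : Set (MonoidAlgebra F G) :=
      ι '' ((⊥ : Ideal (MonoidAlgebra F N)).jacobson : Set (MonoidAlgebra F N))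
    let Iset : Set (MonoidAlgebra F G) := {α : MonoidAlgebra F G | ∀ x ∈ Jset, x * α = 0}
    -- P = F[G]·e
    let P : Ideal (MonoidAlgebra F G) := Ideal.span {e}
    -- I·P
    let IP : Ideal (MonoidAlgebra F G) :=
      Submodule.span (MonoidAlgebra F G) (Set.image2 (· * ·) Iset (P : Set (MonoidAlgebra F G)))
    -- J(F[G])·P
    let JP : Ideal (MonoidAlgebra F G) :=
      Submodule.span (MonoidAlgebra F G)
        (Set.image2 (· * ·)
          (((⊥ : Ideal (MonoidAlgebra F G)).jacobson : Set (MonoidAlgebra F G)))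
          (P : Set (MonoidAlgebra F G)))
    -- note that I ∩ P = I·P
    (Iset ∩ (P : Set (MonoidAlgebra F G)) = (IP : Set (MonoidAlgebra F G))) ∧
    -- the dichotomy
    (IP = P ∨ IP ≤ JP) ∧
    -- in the latter case (I·P ≠ P), P/(I·P) is nonzero, its head P/(J·P + I·P) equals
    -- (hence is isomorphic to) the head P/(J·P), and P/(I·P) is indecomposable
    (IP ≠ P →
      (JP ⊔ IP = JP) ∧
      ¬ ∃ X Y : Ideal (MonoidAlgebra F G),
        IP ≤ X ∧ X ≤ P ∧ IP ≤ Y ∧ Y ≤ P ∧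
        X ⊓ Y = IP ∧ X ⊔ Y = P ∧ X ≠ IP ∧ Y ≠ IP) := by
  intro ι Jset Iset P IP JP
  haveI := hN
  haveI : Module.Finite F (MonoidAlgebra F G) :=
    Module.Finite.equiv ((MonoidAlgebra.coeffLinearEquiv (R := F)).trans (Finsupp.linearEquivFunOnFinite F F G)).symm
  have heP : e ∈ P := Ideal.subset_span rfl
  have hIPP : IP ≤ P := by
    rw [Submodule.span_le]
    rintro z ⟨a, ha, b, hb, rfl⟩
    have := P.smul_mem a hb
    simpa [smul_eq_mul] using this
  have hJP_le_jac : JP ≤ Ideal.jacobson (⊥ : Ideal (MonoidAlgebra F G)) := by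
    rw [Submodule.span_le]
    rintro z ⟨a, ha, b, hb, rfl⟩
    exact jac_mul_right ha b
  have h_e_not_jac : e ∉ Ideal.jacobson (⊥ : Ideal (MonoidAlgebra F G)) := by
    intro hej
    have hspanne : Ideal.span {1 - e} ≠ (⊤ : Ideal (MonoidAlgebra F G)) := by
      intro h
      rw [Ideal.eq_top_iff_one] at h
      obtain ⟨a, ha⟩ := Submodule.mem_span_singleton.mp h
      apply he0
      have h2 : (1 - e) * e = 0 := by
        rw [sub_mul, one_mul, he, sub_self]
      calc e = 1 * e := (one_mul e).symm
        _ = (a • (1 - e)) * e := by rw [ha]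
        _ = a • ((1 - e) * e) := smul_mul_assoc a _ e
        _ = 0 := by rw [h2, smul_zero]
    obtain ⟨M, hM, hle⟩ := Ideal.exists_le_maximal _ hspanne
    have heM : e ∈ M := by
      rw [Ideal.jacobson] at hej
      exact Submodule.mem_sInf.mp hej M ⟨bot_le, hM⟩
    have h1M : (1 : MonoidAlgebra F G) ∈ M := by
      have h1 : 1 - e ∈ M := hle (Ideal.subset_span rfl)
      simpa using M.add_mem h1 heM
    exact hM.ne_top (Ideal.eq_top_iff_one M |>.mpr h1M)
  have key : ∀ X : Ideal (MonoidAlgebra F G), X ≤ P → X ≠ P → X ≤ JP := by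
    intro X hXP hXne z hz
    by_contra hzJP
    have hzP := hXP hz
    obtain ⟨c, hc⟩ := Submodule.mem_span_singleton.mp hzP
    have hze : z * e = z := by
      rw [← hc, smul_mul_assoc, he]
    have hespan := span_le_jp (F := F) e he hprim z hze hzJP
    have hPX : P ≤ X := by
      rw [Ideal.span_le, Set.singleton_subset_iff]
      have h1 : Ideal.span {z} ≤ X := by
        rw [Ideal.span_le, Set.singleton_subset_iff]; exact hz
      exact h1 hespan
    exact hXne (le_antisymm hXP hPX)
  refine ⟨?_, ?_, ?_⟩
  · apply Set.Subset.antisymm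
    · rintro α ⟨hαI, hαP⟩
      obtain ⟨c, hc⟩ := Submodule.mem_span_singleton.mp hαP
      have hαe : α * e = α := by rw [← hc, smul_mul_assoc, he]
      have hmem : α * e ∈ Set.image2 (· * ·) Iset (P : Set (MonoidAlgebra F G)) :=
        Set.mem_image2_of_mem hαI heP
      rw [hαe] at hmem
      exact Submodule.subset_span hmem
    · intro α hα
      refine ⟨?_, hIPP hα⟩
      let I' : Ideal (MonoidAlgebra F G) :=
        { carrier := Iset
          add_mem' := fun {a b} ha hb x hx => by rw [mul_add, ha x hx, hb x hx, add_zero]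
          zero_mem' := fun x hx => mul_zero x
          smul_mem' := fun c {a} ha => by
            intro x hx
            have h := ann_smul F N c a ha x hx
            simpa [smul_eq_mul] using h }
      have hIP_le : IP ≤ I' := by
        rw [Submodule.span_le]
        rintro z ⟨a, ha, b, hb, rfl⟩
        intro x hx
        rw [← mul_assoc, ha x hx, zero_mul]
      exact hIP_le hα
  · by_cases hIP : IP = P
    · exact Or.inl hIP
    · exact Or.inr (key IP hIPP hIP)
  · intro hne
    refine ⟨sup_eq_left.mpr (key IP hIPP hne), ?_⟩
    rintro ⟨X, Y, hIX, hXP, hIY, hYP, hinf, hsup, hX, hY⟩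
    have hXne : X ≠ P := by
      intro h
      apply hY
      rw [← hinf, h]
      exact (inf_eq_right.mpr hYP).symm
    have hYne : Y ≠ P := by
      intro h
      apply hX
      rw [← hinf, h]
      exact (inf_eq_left.mpr hXP).symm
    have h1 : P ≤ JP := by
      rw [← hsup]
      exact sup_le (key X hXP hXne) (key Y hYP hYne)
    exact h_e_not_jac (hJP_le_jac (h1 heP))
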